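/- arXiv:1407.5563 — 3 statements merged into one kernel-verified Lean document; each statement's English description precedes it below -/
import Mathlib

section
/- Let (T,d,ρ) be a compact rooted real tree and a,r ∈ (0,∞) with a ≥ r/2. Then any two balls in the level set T(a) of radius r are either equal or disjoint; that is, for σ,σ' ∈ T(a), the sets Γ(σ,r) = B(σ,r)∩T(a) and Γ(σ',r) = B(σ',r)∩T(a) satisfy Γ(σ,r) = Γ(σ',r) or Γ(σ,r) ∩ Γ(σ',r) = ∅. -/
/-- A (rooted) real tree structure on a metric space `T`, given by the assignment
`seg x y` of the unique geodesic arc joining `x` to `y`: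
(i) there is an isometric parametrization of `seg x y` by `[0, dist x y]` with the
correct endpoints; (ii) any continuous injective arc from `x` to `y` has image `seg x y`. -/
structure IsRealTree {T : Type*} [MetricSpace T] (seg : T → T → Set T) : Prop where
  geodesic : ∀ x y : T, ∃ f : ℝ → T, f 0 = x ∧ f (dist x y) = y ∧
    (∀ s ∈ Set.Icc (0:ℝ) (dist x y), ∀ t ∈ Set.Icc (0:ℝ) (dist x y),
      dist (f s) (f t) = |s - t|) ∧ seg x y = f '' Set.Icc 0 (dist x y)
  unique_arc : ∀ x y : T, ∀ q : ℝ → T, ContinuousOn q (Set.Icc 0 1) →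
    Set.InjOn q (Set.Icc 0 1) → q 0 = x → q 1 = y →
    q '' Set.Icc 0 1 = seg x y

open Set

section Helpers

variable {T : Type*} [MetricSpace T]

/-- `f` is an isometric parametrization by `[0,a]` of a geodesic from `ρ` to `x`. -/
def IsGeo (ρ : T) (a : ℝ) (f : ℝ → T) (x : T) : Prop :=
  f 0 = ρ ∧ f a = x ∧ ∀ s ∈ Icc (0:ℝ) a, ∀ t ∈ Icc (0:ℝ) a, dist (f s) (f t) = |s - t|

lemma exists_isGeo {seg : T → T → Set T} (htree : IsRealTree seg) {ρ x : T} {a : ℝ}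
    (hx : dist ρ x = a) : ∃ f, IsGeo ρ a f x := by
  obtain ⟨f, h0, h1, hiso, -⟩ := htree.geodesic ρ x
  rw [hx] at h1 hiso
  exact ⟨f, h0, h1, hiso⟩

namespace IsGeo

variable {ρ x : T} {a : ℝ} {f : ℝ → T}

lemma dist_root (hf : IsGeo ρ a f x) (ha : 0 ≤ a) {s : ℝ} (hs : s ∈ Icc (0:ℝ) a) :
    dist ρ (f s) = s := by
  have h := hf.2.2 0 ⟨le_refl 0, ha⟩ s hs
  rw [hf.1] at h
  rw [h, zero_sub, abs_neg, abs_of_nonneg hs.1]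

lemma continuousOn (hf : IsGeo ρ a f x) : ContinuousOn f (Icc 0 a) := by
  have h : LipschitzOnWith 1 f (Icc 0 a) := by
    apply LipschitzOnWith.of_dist_le_mul
    intro s hs t ht
    rw [hf.2.2 s hs t ht, NNReal.coe_one, one_mul, Real.dist_eq]
  exact h.continuousOn

lemma injOn (hf : IsGeo ρ a f x) : InjOn f (Icc 0 a) := by
  intro s hs t ht h
  have h2 := hf.2.2 s hs t ht
  rw [h, dist_self] at h2
  have h3 := abs_eq_zero.mp h2.symm
  linarith [sub_eq_zero.mp h3]

lemma arc_image {seg : T → T → Set T} (htree : IsRealTree seg) (hf : IsGeo ρ a f x)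
    {s : ℝ} (hs0 : 0 < s) (hsa : s ≤ a) :
    (fun u => f (s * u)) '' Icc 0 1 = seg ρ (f s) := by
  have hmaps : MapsTo (fun u => s * u) (Icc (0:ℝ) 1) (Icc 0 a) := by
    intro u hu
    have h1 : s * u ≤ a := by nlinarith [hu.1, hu.2]
    exact ⟨mul_nonneg hs0.le hu.1, h1⟩
  apply htree.unique_arc
  · exact hf.continuousOn.comp ((continuous_const.mul continuous_id).continuousOn) hmaps
  · intro u hu v hv h
    have h2 := hf.injOn (hmaps hu) (hmaps hv) h
    exact mul_left_cancel₀ (ne_of_gt hs0) h2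
  · show f (s * 0) = ρ
    rw [mul_zero, hf.1]
  · show f (s * 1) = f s
    rw [mul_one]

end IsGeo

/-- If two geodesics from the root agree at time `s`, they agree on `[0,s]`. -/
lemma agree_of_agree {seg : T → T → Set T} (htree : IsRealTree seg) {ρ x y : T} {a : ℝ}
    {f g : ℝ → T} (hf : IsGeo ρ a f x) (hg : IsGeo ρ a g y) (ha : 0 ≤ a) {s : ℝ}
    (hs : s ∈ Icc (0:ℝ) a) (hfg : f s = g s) {t : ℝ} (ht : t ∈ Icc (0:ℝ) s) : f t = g t := by
  rcases eq_or_lt_of_le hs.1 with h0 | h0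
  · have h1 : t = 0 := le_antisymm (by rw [h0]; exact ht.2) ht.1
    rw [h1, hf.1, hg.1]
  · have h1 := hf.arc_image htree h0 hs.2
    have h2 := hg.arc_image htree h0 hs.2
    rw [← hfg] at h2
    have htm : f t ∈ (fun u => g (s * u)) '' Icc 0 1 := by
      rw [h2, ← h1]
      refine ⟨t / s, ⟨div_nonneg ht.1 h0.le, div_le_one_of_le₀ ht.2 h0.le⟩, ?_⟩
      show f (s * (t / s)) = f t
      rw [mul_div_cancel₀ _ (ne_of_gt h0)]
    obtain ⟨u, hu, hgu⟩ := htm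
    have hsu : s * u ∈ Icc (0:ℝ) a := ⟨mul_nonneg h0.le hu.1, by nlinarith [hu.2, hs.2]⟩
    have hta : t ∈ Icc (0:ℝ) a := ⟨ht.1, le_trans ht.2 hs.2⟩
    have e1 := hg.dist_root ha hsu
    have e2 := hf.dist_root ha hta
    rw [show g (s * u) = f t from hgu, e2] at e1
    have hgu' : g (s * u) = f t := hgu
    rw [e1] at hgu'
    rw [e1]
    exact hgu'.symm

/-- The meet time of two root geodesics: the sup of their agreement set. -/
noncomputable def meetTime (a : ℝ) (f g : ℝ → T) : ℝ :=
  sSup {t | t ∈ Icc (0:ℝ) a ∧ f t = g t}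

lemma meet_spec {ρ x y : T} {a : ℝ} {f g : ℝ → T}
    (hf : IsGeo ρ a f x) (hg : IsGeo ρ a g y) (ha : 0 ≤ a) :
    meetTime a f g ∈ Icc (0:ℝ) a ∧ f (meetTime a f g) = g (meetTime a f g) := by
  set S : Set ℝ := {t | t ∈ Icc (0:ℝ) a ∧ f t = g t} with hSdef
  have hS0 : (0:ℝ) ∈ S := ⟨⟨le_refl 0, ha⟩, by rw [hf.1, hg.1]⟩
  have bdd : BddAbove S := ⟨a, fun t ht => ht.1.2⟩
  have hb0 : (0:ℝ) ≤ meetTime a f g := le_csSup bdd hS0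
  have hba : meetTime a f g ≤ a := csSup_le ⟨0, hS0⟩ fun t ht => ht.1.2
  refine ⟨⟨hb0, hba⟩, ?_⟩
  set b := meetTime a f g with hbdef
  have hbmem : b ∈ Icc (0:ℝ) a := ⟨hb0, hba⟩
  have key : ∀ ε > (0:ℝ), dist (f b) (g b) ≤ 0 + ε := by
    intro ε hε
    obtain ⟨t, htS, hlt⟩ := exists_lt_of_lt_csSup ⟨0, hS0⟩
      (show b - ε/2 < b by linarith)
    have htb : t ≤ b := le_csSup bdd htS
    have h1 : dist (f b) (g b) ≤ dist (f b) (f t) + dist (g t) (g b) := by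
      calc dist (f b) (g b) ≤ dist (f b) (f t) + dist (f t) (g b) := dist_triangle _ _ _
        _ = dist (f b) (f t) + dist (g t) (g b) := by rw [htS.2]
    rw [hf.2.2 b hbmem t htS.1, hg.2.2 t htS.1 b hbmem] at h1
    rw [abs_of_nonneg (by linarith), abs_of_nonpos (by linarith)] at h1
    linarith
  have h2 : dist (f b) (g b) ≤ 0 := le_of_forall_pos_le_add key
  exact dist_le_zero.mp h2

/-- The distance between two points at level `a` equals `2 * (a - meet time)`. -/
lemma dist_eq_meet {seg : T → T → Set T} (htree : IsRealTree seg) {ρ x y : T} {a : ℝ}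
    {f g : ℝ → T} (hf : IsGeo ρ a f x) (hg : IsGeo ρ a g y) (ha : 0 ≤ a) :
    dist x y = 2 * (a - meetTime a f g) := by
  obtain ⟨hbmem, hfb⟩ := meet_spec hf hg ha
  set S : Set ℝ := {t | t ∈ Icc (0:ℝ) a ∧ f t = g t} with hSdef
  have hS0 : (0:ℝ) ∈ S := ⟨⟨le_refl 0, ha⟩, by rw [hf.1, hg.1]⟩
  have bdd : BddAbove S := ⟨a, fun t ht => ht.1.2⟩
  set b := meetTime a f g with hbdef
  rcases eq_or_lt_of_le hbmem.2 with hb | hb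
  · -- b = a : x = y
    have hx : f a = g a := by rw [← hb]; exact hfb
    rw [hf.2.1, hg.2.1] at hx
    rw [hx, dist_self, ← hb]
    ring
  · set c := a - b with hc
    have hc0 : 0 < c := by simp only [hc]; linarith
    set q : ℝ → T := fun u => if u ≤ 1/2 then f (a - 2*c*u) else g (b + 2*c*(u - 1/2))
      with hqdef
    have hmem1 : ∀ u : ℝ, 0 ≤ u → u ≤ 1/2 → a - 2*c*u ∈ Icc (0:ℝ) a := by
      intro u h1 h2
      constructor
      · nlinarith [hbmem.1]
      · nlinarith
    have hmem2 : ∀ u : ℝ, 1/2 ≤ u → u ≤ 1 → b + 2*c*(u - 1/2) ∈ Icc (0:ℝ) a := by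
      intro u h1 h2
      constructor
      · nlinarith [hbmem.1]
      · nlinarith
    have hcont : ContinuousOn q (Icc 0 1) := by
      apply ContinuousOn.if
      · intro u hu
        have hu2 : u ∈ frontier {a : ℝ | a ≤ 1/2} := hu.2
        rw [show {a : ℝ | a ≤ 1/2} = Iic (1/2) from rfl, frontier_Iic] at hu2
        have huv : u = 1/2 := hu2
        show f (a - 2*c*u) = g (b + 2*c*(u - 1/2))
        rw [huv, show a - 2*c*(1/2 : ℝ) = b by rw [hc]; ring,
          show b + 2*c*((1/2:ℝ) - 1/2) = b by ring]
        exact hfb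
      · have hsub : Icc (0:ℝ) 1 ∩ closure {a : ℝ | a ≤ 1/2} ⊆ Icc 0 1 ∩ Iic (1/2) := by
          rw [show {a : ℝ | a ≤ 1/2} = Iic (1/2) from rfl, closure_Iic]
        refine ContinuousOn.comp hf.continuousOn ?_ ?_
        · exact (continuous_const.sub (continuous_const.mul continuous_id)).continuousOn
        · intro u hu
          have hu' := hsub hu
          exact hmem1 u hu'.1.1 hu'.2
      · have hsub : Icc (0:ℝ) 1 ∩ closure {a : ℝ | ¬ a ≤ 1/2} ⊆ Icc 0 1 ∩ Ici (1/2) := by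
          rw [show {a : ℝ | ¬ a ≤ 1/2} = Ioi (1/2) from by ext v; simp [not_le], closure_Ioi]
        refine ContinuousOn.comp hg.continuousOn ?_ ?_
        · exact (continuous_const.add (continuous_const.mul
            (continuous_id.sub continuous_const))).continuousOn
        · intro u hu
          have hu' := hsub hu
          exact hmem2 u hu'.2 hu'.1.2
    have hinj : InjOn q (Icc 0 1) := by
      intro u hu v hv h
      by_cases hu2 : u ≤ 1/2 <;> by_cases hv2 : v ≤ 1/2
      · simp only [hqdef, if_pos hu2, if_pos hv2] at h
        have h2 := hf.injOn (hmem1 u hu.1 hu2) (hmem1 v hv.1 hv2) h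
        have h3 : (2*c) * u = (2*c) * v := by linarith
        exact mul_left_cancel₀ (by positivity) h3
      · exfalso
        simp only [hqdef, if_pos hu2, if_neg hv2] at h
        push_neg at hv2
        have hs : a - 2*c*u ∈ Icc (0:ℝ) a := hmem1 u hu.1 hu2
        have ht : b + 2*c*(v - 1/2) ∈ Icc (0:ℝ) a := hmem2 v hv2.le hv.2
        have e1 := hf.dist_root ha hs
        have e2 := hg.dist_root ha ht
        rw [h, e2] at e1
        have hfgt : f (b + 2*c*(v - 1/2)) = g (b + 2*c*(v - 1/2)) := by
          rw [e1] at h ⊢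
          exact h
        have hSmem : b + 2*c*(v - 1/2) ∈ S := ⟨ht, hfgt⟩
        have hle : b + 2*c*(v - 1/2) ≤ b := le_csSup bdd hSmem
        nlinarith
      · exfalso
        simp only [hqdef, if_neg hu2, if_pos hv2] at h
        push_neg at hu2
        have hs : a - 2*c*v ∈ Icc (0:ℝ) a := hmem1 v hv.1 hv2
        have ht : b + 2*c*(u - 1/2) ∈ Icc (0:ℝ) a := hmem2 u hu2.le hu.2
        have e1 := hf.dist_root ha hs
        have e2 := hg.dist_root ha ht
        rw [← h, e2] at e1
        have hfgt : f (b + 2*c*(u - 1/2)) = g (b + 2*c*(u - 1/2)) := by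
          rw [e1] at h ⊢
          exact h.symm
        have hSmem : b + 2*c*(u - 1/2) ∈ S := ⟨ht, hfgt⟩
        have hle : b + 2*c*(u - 1/2) ≤ b := le_csSup bdd hSmem
        nlinarith
      · simp only [hqdef, if_neg hu2, if_neg hv2] at h
        push_neg at hu2 hv2
        have h2 := hg.injOn (hmem2 u hu2.le hu.2) (hmem2 v hv2.le hv.2) h
        have h3 : (2*c) * (u - 1/2) = (2*c) * (v - 1/2) := by linarith
        have h4 := mul_left_cancel₀ (show (2:ℝ)*c ≠ 0 by positivity) h3
        linarith
    have hq0 : q 0 = x := by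
      show (if (0:ℝ) ≤ 1/2 then f (a - 2*c*0) else g (b + 2*c*(0 - 1/2))) = x
      rw [if_pos (by norm_num), show a - 2*c*0 = a by ring, hf.2.1]
    have hq1 : q 1 = y := by
      show (if (1:ℝ) ≤ 1/2 then f (a - 2*c*1) else g (b + 2*c*(1 - 1/2))) = y
      rw [if_neg (by norm_num), show b + 2*c*((1:ℝ) - 1/2) = a by rw [hc]; ring, hg.2.1]
    have himg : q '' Icc 0 1 = seg x y := htree.unique_arc x y q hcont hinj hq0 hq1
    obtain ⟨F, hF0, hFd, hFiso, hFseg⟩ := htree.geodesic x y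
    have hfbmem : f b ∈ seg x y := by
      rw [← himg]
      refine ⟨1/2, ⟨by norm_num, by norm_num⟩, ?_⟩
      show (if (1/2:ℝ) ≤ 1/2 then f (a - 2*c*(1/2)) else g (b + 2*c*(1/2 - 1/2))) = f b
      rw [if_pos le_rfl, show a - 2*c*(1/2:ℝ) = b by rw [hc]; ring]
    rw [hFseg] at hfbmem
    obtain ⟨t, htmem, hFt⟩ := hfbmem
    have hd0 : (0:ℝ) ≤ dist x y := dist_nonneg
    have e1 : dist x (f b) = t := by
      have h := hFiso 0 ⟨le_refl 0, hd0⟩ t htmem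
      rw [hF0, hFt] at h
      rw [h, zero_sub, abs_neg, abs_of_nonneg htmem.1]
    have e2 : dist (f b) y = dist x y - t := by
      have h := hFiso t htmem (dist x y) ⟨hd0, le_refl _⟩
      rw [hFd, hFt] at h
      rw [h, abs_of_nonpos (by linarith [htmem.2])]
      ring
    have e3 : dist x (f b) = c := by
      have h := hf.2.2 a ⟨ha, le_refl a⟩ b hbmem
      rw [hf.2.1] at h
      rw [h, abs_of_nonneg (by linarith [hbmem.2]), hc]
    have e4 : dist (f b) y = c := by
      have h := hg.2.2 b hbmem a ⟨ha, le_refl a⟩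
      rw [hg.2.1] at h
      rw [hfb, h, abs_of_nonpos (by linarith [hbmem.2]), hc]
      ring
    have hfin : dist x y = 2*c := by linarith
    rw [hfin, hc]

/-- Ultrametric inequality on level sets of a real tree. -/
lemma level_ultrametric {seg : T → T → Set T} (htree : IsRealTree seg) {ρ x y z : T}
    {a : ℝ} (ha : 0 ≤ a) (hx : dist ρ x = a) (hy : dist ρ y = a) (hz : dist ρ z = a) :
    dist x z ≤ max (dist x y) (dist y z) := by
  obtain ⟨f, hf⟩ := exists_isGeo htree hx
  obtain ⟨g, hg⟩ := exists_isGeo htree hy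
  obtain ⟨h, hh⟩ := exists_isGeo htree hz
  have dxy := dist_eq_meet htree hf hg ha
  have dyz := dist_eq_meet htree hg hh ha
  have dxz := dist_eq_meet htree hf hh ha
  obtain ⟨hb1mem, hb1⟩ := meet_spec hf hg ha
  obtain ⟨hb2mem, hb2⟩ := meet_spec hg hh ha
  set b1 := meetTime a f g
  set b2 := meetTime a g h
  set m := min b1 b2 with hm
  have hmmem : m ∈ Icc (0:ℝ) a := ⟨le_min hb1mem.1 hb2mem.1,
    le_trans (min_le_left _ _) hb1mem.2⟩
  have hfm : f m = g m :=
    agree_of_agree htree hf hg ha hb1mem hb1 ⟨hmmem.1, min_le_left _ _⟩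
  have hgm : g m = h m :=
    agree_of_agree htree hg hh ha hb2mem hb2 ⟨hmmem.1, min_le_right _ _⟩
  have hle : m ≤ meetTime a f h :=
    le_csSup ⟨a, fun t ht => ht.1.2⟩ ⟨hmmem, hfm.trans hgm⟩
  have hxz : dist x z ≤ 2 * (a - m) := by rw [dxz]; linarith
  rcases le_total b1 b2 with h12 | h21
  · have hmb : m = b1 := min_eq_left h12
    rw [hmb] at hxz
    exact le_trans (by linarith) (le_max_left _ _)
  · have hmb : m = b2 := min_eq_right h21
    rw [hmb] at hxz
    exact le_trans (by linarith) (le_max_right _ _)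

end Helpers

/-- In a compact rooted real tree, for `a ≥ r/2 > 0`, any two balls of
radius `r` in the level set `T(a)`, i.e. sets `Γ(σ,r) = B(σ,r) ∩ T(a)` with
`σ ∈ T(a)`, are either equal or disjoint. -/
theorem stmt2 {T : Type*} [MetricSpace T] [CompactSpace T]
    (seg : T → T → Set T) (htree : IsRealTree seg) (ρ : T)
    (a r : ℝ) (ha : 0 < a) (hr : 0 < r) (har : r / 2 ≤ a)
    (σ σ' : T) (hσ : dist ρ σ = a) (hσ' : dist ρ σ' = a) :
    Metric.ball σ r ∩ {τ : T | dist ρ τ = a}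
        = Metric.ball σ' r ∩ {τ : T | dist ρ τ = a}
    ∨ (Metric.ball σ r ∩ {τ : T | dist ρ τ = a})
        ∩ (Metric.ball σ' r ∩ {τ : T | dist ρ τ = a}) = ∅ := by
  by_cases hne : ((Metric.ball σ r ∩ {τ : T | dist ρ τ = a})
      ∩ (Metric.ball σ' r ∩ {τ : T | dist ρ τ = a})).Nonempty
  · left
    obtain ⟨τ, ⟨hτ1, hτa⟩, hτ2, -⟩ := hne
    have ha0 : (0:ℝ) ≤ a := ha.le
    rw [Metric.mem_ball] at hτ1 hτ2
    have hτa' : dist ρ τ = a := hτa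
    have hσσ' : dist σ σ' < r := by
      have h := level_ultrametric htree ha0 hσ hτa' hσ'
      have h1 : dist σ τ < r := by rw [dist_comm]; exact hτ1
      have h2 : dist τ σ' < r := hτ2
      exact lt_of_le_of_lt h (max_lt h1 h2)
    ext υ
    simp only [Set.mem_inter_iff, Metric.mem_ball, Set.mem_setOf_eq]
    constructor
    · rintro ⟨h1, h2⟩
      refine ⟨?_, h2⟩
      have h3 := level_ultrametric htree ha0 h2 hσ hσ'
      exact lt_of_le_of_lt h3 (max_lt h1 hσσ')
    · rintro ⟨h1, h2⟩
      refine ⟨?_, h2⟩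
      have h3 := level_ultrametric htree ha0 h2 hσ' hσ
      have hσ'σ : dist σ' σ < r := by rw [dist_comm]; exact hσσ'
      exact lt_of_le_of_lt h3 (max_lt h1 hσ'σ)
  · right
    rwa [Set.not_nonempty_iff_eq_empty] at hne
end

section
/- Let (T,d,ρ) be a compact rooted real tree and a ∈ (0,∞). For any σ ∈ T(a) and r ∈ (0,2a), the diameter of the T(a)-ball Γ(σ,r) = B(σ,r) ∩ T(a) is strictly less than r, and for every r' with diam(Γ(σ,r)) < r' < r one has Γ(σ,r') = Γ(σ,r). -/
open Set

/-- An isometric parametrization, rescaled to `[0,1]`, is continuous and injective,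
with image the segment. -/
lemma geo_image {T : Type*} [MetricSpace T] {seg : T → T → Set T}
    (htree : IsRealTree seg) (f : ℝ → T) (L : ℝ) (hLpos : 0 < L)
    (hf : ∀ s ∈ Icc (0:ℝ) L, ∀ t ∈ Icc (0:ℝ) L, dist (f s) (f t) = |s - t|) :
    f '' Icc 0 L = seg (f 0) (f L) := by
  have key : ∀ s ∈ Icc (0:ℝ) 1, s * L ∈ Icc (0:ℝ) L := by
    intro s hs
    exact ⟨mul_nonneg hs.1 hLpos.le, by nlinarith [hs.2]⟩
  have hd : ∀ s ∈ Icc (0:ℝ) 1, ∀ t ∈ Icc (0:ℝ) 1,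
      dist (f (s * L)) (f (t * L)) = L * |s - t| := by
    intro s hs t ht
    rw [hf _ (key s hs) _ (key t ht), ← sub_mul, abs_mul, abs_of_pos hLpos, mul_comm]
  have hcont : ContinuousOn (fun s => f (s * L)) (Icc 0 1) := by
    apply LipschitzOnWith.continuousOn (K := L.toNNReal)
    apply LipschitzOnWith.of_dist_le_mul
    intro s hs t ht
    rw [hd s hs t ht, Real.coe_toNNReal _ hLpos.le, Real.dist_eq]
  have hinj : Set.InjOn (fun s => f (s * L)) (Icc 0 1) := by
    intro s hs t ht hst
    by_contra hne
    simp only at hst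
    have := hd s hs t ht
    rw [hst, dist_self] at this
    have : |s - t| = 0 := by
      rcases mul_eq_zero.mp this.symm with h | h
      · exact absurd h hLpos.ne'
      · exact h
    exact hne (by linarith [abs_eq_zero.mp this, sub_eq_zero.mp (abs_eq_zero.mp this)])
  have := htree.unique_arc (f 0) (f L) (fun s => f (s * L)) hcont hinj
    (by norm_num) (by norm_num)
  rw [← this]
  ext p
  constructor
  · rintro ⟨t, ht, rfl⟩
    exact ⟨t / L, ⟨div_nonneg ht.1 hLpos.le, (div_le_one hLpos).mpr ht.2⟩,
      by simp [div_mul_cancel₀ _ hLpos.ne']⟩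
  · rintro ⟨s, hs, rfl⟩
    exact ⟨s * L, key s hs, rfl⟩

/-- Two isometric parametrizations on `[0,L]` with the same endpoints agree. -/
lemma geo_unique {T : Type*} [MetricSpace T] {seg : T → T → Set T}
    (htree : IsRealTree seg) (f g : ℝ → T) (L : ℝ)
    (hf : ∀ s ∈ Icc (0:ℝ) L, ∀ t ∈ Icc (0:ℝ) L, dist (f s) (f t) = |s - t|)
    (hg : ∀ s ∈ Icc (0:ℝ) L, ∀ t ∈ Icc (0:ℝ) L, dist (g s) (g t) = |s - t|)
    (h0 : f 0 = g 0) (hL : f L = g L) :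
    ∀ t ∈ Icc (0:ℝ) L, f t = g t := by
  intro t ht
  rcases eq_or_lt_of_le (ht.1.trans ht.2) with h | hLpos
  · have ht0 : t = 0 := le_antisymm (ht.2.trans h.symm.le) ht.1
    rw [ht0, h0]
  · have h1 := geo_image htree f L hLpos hf
    have h2 := geo_image htree g L hLpos hg
    rw [h0, hL] at h1
    have : f t ∈ g '' Icc 0 L := by
      rw [h2, ← h1]; exact ⟨t, ht, rfl⟩
    obtain ⟨s, hs, hst⟩ := this
    have e1 : dist (f 0) (f t) = t := by
      rw [hf 0 ⟨le_refl 0, hLpos.le⟩ t ht, abs_sub_comm, sub_zero, abs_of_nonneg ht.1]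
    have e2 : dist (g 0) (g s) = s := by
      rw [hg 0 ⟨le_refl 0, hLpos.le⟩ s hs, abs_sub_comm, sub_zero, abs_of_nonneg hs.1]
    have hts : t = s := by rw [← e1, ← e2, h0, hst]
    subst hts
    exact hst.symm

/-- Geodesics from a common root agree up to the Gromov product of the endpoints. -/
lemma gromov_agree {T : Type*} [MetricSpace T] {seg : T → T → Set T}
    (htree : IsRealTree seg) (ρ x y : T) (f g : ℝ → T)
    (hf0 : f 0 = ρ) (hfx : f (dist ρ x) = x)
    (hf : ∀ s ∈ Icc (0:ℝ) (dist ρ x), ∀ t ∈ Icc (0:ℝ) (dist ρ x),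
      dist (f s) (f t) = |s - t|)
    (hg0 : g 0 = ρ) (hgy : g (dist ρ y) = y)
    (hg : ∀ s ∈ Icc (0:ℝ) (dist ρ y), ∀ t ∈ Icc (0:ℝ) (dist ρ y),
      dist (g s) (g t) = |s - t|) :
    ∀ t ∈ Icc (0:ℝ) ((dist ρ x + dist ρ y - dist x y) / 2), f t = g t := by
  set ax := dist ρ x with hax
  set ay := dist ρ y with hay
  have hax0 : 0 ≤ ax := dist_nonneg
  have hay0 : 0 ≤ ay := dist_nonneg
  set S : Set ℝ := {t | t ∈ Icc (0:ℝ) (min ax ay) ∧ f t = g t} with hSdef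
  have hS0 : (0:ℝ) ∈ S := ⟨⟨le_refl 0, le_min hax0 hay0⟩, by rw [hf0, hg0]⟩
  have hSne : S.Nonempty := ⟨0, hS0⟩
  have hSbdd : BddAbove S := ⟨min ax ay, fun t ht => ht.1.2⟩
  set c := sSup S with hc
  have hc0 : 0 ≤ c := le_csSup hSbdd hS0
  have hcmin : c ≤ min ax ay := csSup_le hSne fun t ht => ht.1.2
  have hcx : c ≤ ax := hcmin.trans (min_le_left _ _)
  have hcy : c ≤ ay := hcmin.trans (min_le_right _ _)
  -- f c = g c
  have hfgc : f c = g c := by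
    by_contra hne
    have hdpos : 0 < dist (f c) (g c) := dist_pos.mpr hne
    obtain ⟨t, htS, hlt⟩ := exists_lt_of_lt_csSup hSne
      (show c - dist (f c) (g c) / 4 < c by linarith)
    have htc : t ≤ c := le_csSup hSbdd htS
    have ht0 : 0 ≤ t := htS.1.1
    have h1 : dist (f c) (f t) = c - t := by
      rw [hf c ⟨hc0, hcx⟩ t ⟨ht0, htS.1.2.trans (min_le_left _ _)⟩,
        abs_of_nonneg (by linarith)]
    have h2 : dist (g t) (g c) = c - t := by
      rw [hg t ⟨ht0, htS.1.2.trans (min_le_right _ _)⟩ c ⟨hc0, hcy⟩,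
        abs_of_nonpos (by linarith), neg_sub]
    have := dist_triangle (f c) (f t) (g c)
    rw [h1, htS.2, h2] at this
    linarith
  -- the length of the concatenated arc equals dist x y
  have hdL : ax - c + (ay - c) ≤ dist x y := by
    set L1 := ax - c with hL1
    set L2 := ay - c with hL2
    set L := L1 + L2 with hL
    have hL1nn : 0 ≤ L1 := by simp [hL1]; linarith
    have hL2nn : 0 ≤ L2 := by simp [hL2]; linarith
    rcases le_or_gt L 0 with hL0 | hLpos
    · exact le_trans hL0 dist_nonneg
    -- the concatenated path
    set q : ℝ → T := fun s => if s ≤ L1 / L then f (ax - s * L) else g (c + s * L - L1)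
      with hq
    have harg1 : ∀ s : ℝ, 0 ≤ s → s ≤ L1 / L → ax - s * L ∈ Icc (0:ℝ) ax := by
      intro s hs0 hs1
      have : s * L ≤ L1 := (le_div_iff₀ hLpos).mp hs1
      constructor
      · linarith
      · nlinarith
    have harg2 : ∀ s : ℝ, L1 / L ≤ s → s ≤ 1 → c + s * L - L1 ∈ Icc (0:ℝ) ay := by
      intro s hs0 hs1
      have h1 : L1 ≤ s * L := (div_le_iff₀ hLpos).mp hs0
      have h2 : s * L ≤ L := by nlinarith
      constructor
      · linarith
      · simp only [hL1] at h1 ⊢; linarith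
    have hmem1 : ∀ s : ℝ, 0 ≤ s → s ≤ L1 / L → ax - s * L ∈ Icc c ax := by
      intro s hs0 hs1
      have : s * L ≤ L1 := (le_div_iff₀ hLpos).mp hs1
      exact ⟨by simp only [hL1] at this; linarith, by nlinarith⟩
    have hmem2 : ∀ s : ℝ, L1 / L ≤ s → s ≤ 1 → c ≤ c + s * L - L1 := by
      intro s hs0 hs1
      have h1 : L1 ≤ s * L := (div_le_iff₀ hLpos).mp hs0
      linarith
    -- values of q
    have hq1 : ∀ s : ℝ, s ≤ L1 / L → q s = f (ax - s * L) := by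
      intro s hs; simp only [hq, if_pos hs]
    have hq2 : ∀ s : ℝ, ¬ (s ≤ L1 / L) → q s = g (c + s * L - L1) := by
      intro s hs; simp only [hq, if_neg hs]
    have hL1L : L1 / L ≤ 1 := by
      rw [div_le_one hLpos]; linarith
    have hL1L0 : 0 ≤ L1 / L := div_nonneg hL1nn hLpos.le
    have hq0x : q 0 = x := by
      rw [hq1 0 hL1L0]
      simp [hfx]
    have hqc : q (L1 / L) = f c := by
      rw [hq1 _ (le_refl _), div_mul_cancel₀ _ hLpos.ne']
      congr 1
      simp [hL1]
    have hq1y : q 1 = y := by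
      rcases eq_or_lt_of_le hL2nn with h2 | h2
      · -- L2 = 0 : junction is the endpoint y
        have hL1L' : L1 / L = 1 := by
          have : L = L1 := by simp [hL, ← h2]
          rw [this, div_self (by rw [← this]; exact hLpos.ne')]
        rw [hq1 1 (hL1L'.ge), one_mul]
        have : ax - L = c := by rw [hL, ← h2, add_zero, hL1]; ring
        rw [this, hfgc]
        have : c = ay := by simp [hL2] at h2; linarith
        rw [this, hgy]
      · have : ¬ ((1:ℝ) ≤ L1 / L) := by
          intro h
          rw [le_div_iff₀ hLpos, one_mul] at h
          nlinarith
        rw [hq2 1 this, one_mul]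
        have : c + L - L1 = ay := by simp [hL, hL2]; ring
        rw [this, hgy]
    -- Lipschitz bound for ordered pairs
    have hlip' : ∀ s ∈ Icc (0:ℝ) 1, ∀ t ∈ Icc (0:ℝ) 1, s ≤ t →
        dist (q s) (q t) ≤ L * (t - s) := by
      intro s hs t ht hst
      rcases le_or_gt t (L1 / L) with h1 | h1
      · have hs1 : s ≤ L1 / L := hst.trans h1
        rw [hq1 s hs1, hq1 t h1, hf _ (harg1 s hs.1 hs1) _ (harg1 t ht.1 h1),
          show ax - s * L - (ax - t * L) = (t - s) * L by ring,
          abs_of_nonneg (by nlinarith), mul_comm]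
      · rcases le_or_gt s (L1 / L) with h2 | h2
        · -- mixed case
          have hsL : s * L ≤ L1 := (le_div_iff₀ hLpos).mp h2
          have htL : L1 ≤ t * L := ((div_le_iff₀ hLpos).mp h1.le)
          rw [hq1 s h2, hq2 t (not_le.mpr h1)]
          have tri := dist_triangle (f (ax - s * L)) (f c) (g (c + t * L - L1))
          have e1 : dist (f (ax - s * L)) (f c) = L1 - s * L := by
            rw [hf _ (harg1 s hs.1 h2) c ⟨hc0, hcx⟩, abs_of_nonneg (by simp [hL1]; linarith)]
            simp [hL1]; ring
          have e2 : dist (f c) (g (c + t * L - L1)) = t * L - L1 := by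
            rw [hfgc, hg c ⟨hc0, hcy⟩ _ (harg2 t h1.le ht.2),
              abs_of_nonpos (by linarith), neg_sub]
            ring
          rw [e1, e2] at tri
          calc dist (f (ax - s * L)) (g (c + t * L - L1))
              ≤ L1 - s * L + (t * L - L1) := tri
            _ = L * (t - s) := by ring
        · rw [hq2 s (not_le.mpr h2), hq2 t (not_le.mpr h1),
            hg _ (harg2 s h2.le hs.2) _ (harg2 t h1.le ht.2),
            show c + s * L - L1 - (c + t * L - L1) = -((t - s) * L) by ring,
            abs_neg, abs_of_nonneg (by nlinarith), mul_comm]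
    have hlip : ∀ s ∈ Icc (0:ℝ) 1, ∀ t ∈ Icc (0:ℝ) 1,
        dist (q s) (q t) ≤ L * |s - t| := by
      intro s hs t ht
      rcases le_total s t with h | h
      · rw [abs_of_nonpos (by linarith), neg_sub]; exact hlip' s hs t ht h
      · rw [abs_of_nonneg (by linarith), dist_comm]; exact hlip' t ht s hs h
    have hcont : ContinuousOn q (Icc 0 1) := by
      apply LipschitzOnWith.continuousOn (K := L.toNNReal)
      apply LipschitzOnWith.of_dist_le_mul
      intro s hs t ht
      rw [Real.coe_toNNReal _ hLpos.le, Real.dist_eq]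
      exact hlip s hs t ht
    have hinj : Set.InjOn q (Icc 0 1) := by
      have key : ∀ s ∈ Icc (0:ℝ) 1, ∀ t ∈ Icc (0:ℝ) 1, s < t → q s ≠ q t := by
        intro s hs t ht hst heq
        rcases le_or_gt t (L1 / L) with h1 | h1
        · have hs1 : s ≤ L1 / L := hst.le.trans h1
          have := hf _ (harg1 s hs.1 hs1) _ (harg1 t ht.1 h1)
          rw [← hq1 s hs1, ← hq1 t h1, heq, dist_self,
            show ax - s * L - (ax - t * L) = (t - s) * L by ring,
            abs_of_nonneg (by nlinarith : (0:ℝ) ≤ (t - s) * L)] at this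
          nlinarith
        · rcases le_or_gt s (L1 / L) with h2 | h2
          · -- mixed : a genuine intersection point beyond the branch time
            have hsL : s * L ≤ L1 := (le_div_iff₀ hLpos).mp h2
            have htL : L1 < t * L := by
              have := (div_lt_iff₀ hLpos).mp h1; linarith
            set u := ax - s * L with hu
            set v := c + t * L - L1 with hv
            have hfu : q s = f u := hq1 s h2
            have hgv : q t = g v := hq2 t (not_le.mpr h1)
            have hfgu : f u = g v := by rw [← hfu, ← hgv, heq]
            have huI : u ∈ Icc (0:ℝ) ax := harg1 s hs.1 h2
            have hvI : v ∈ Icc (0:ℝ) ay := harg2 t h1.le ht.2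
            have du : dist (f 0) (f u) = u := by
              rw [hf 0 ⟨le_refl 0, hax0⟩ u huI, abs_sub_comm, sub_zero,
                abs_of_nonneg huI.1]
            have dv : dist (g 0) (g v) = v := by
              rw [hg 0 ⟨le_refl 0, hay0⟩ v hvI, abs_sub_comm, sub_zero,
                abs_of_nonneg hvI.1]
            have huv : u = v := by rw [← du, ← dv, hf0, hg0, hfgu]
            have hvc : c < v := by simp only [hv]; linarith
            have huS : u ∈ S := by
              refine ⟨⟨huI.1, le_min huI.2 (huv ▸ hvI.2)⟩, ?_⟩
              rw [hfgu, huv]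
            have : u ≤ c := le_csSup hSbdd huS
            rw [huv] at this
            linarith
          · have := hg _ (harg2 s h2.le hs.2) _ (harg2 t h1.le ht.2)
            rw [← hq2 s (not_le.mpr h2), ← hq2 t (not_le.mpr h1), heq, dist_self,
              show c + s * L - L1 - (c + t * L - L1) = -((t - s) * L) by ring,
              abs_neg, abs_of_nonneg (by nlinarith : (0:ℝ) ≤ (t - s) * L)] at this
            nlinarith
      intro s hs t ht heq
      rcases lt_trichotomy s t with h | h | h
      · exact absurd heq (key s hs t ht h)
      · exact h
      · exact absurd heq.symm (key t ht s hs h)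
    have himg := htree.unique_arc x y q hcont hinj hq0x hq1y
    obtain ⟨w, hw0, hwd, hwI, hwseg⟩ := htree.geodesic x y
    have hm : f c ∈ w '' Icc 0 (dist x y) := by
      rw [← hwseg, ← himg]
      exact ⟨L1 / L, ⟨hL1L0, hL1L⟩, hqc⟩
    obtain ⟨s, hsI, hws⟩ := hm
    have e1 : dist x (f c) = L1 := by
      rw [← hfx, hf ax ⟨hax0, le_refl ax⟩ c ⟨hc0, hcx⟩, abs_of_nonneg (by linarith)]
    have e2 : dist (f c) y = L2 := by
      rw [hfgc, ← hgy, hg c ⟨hc0, hcy⟩ ay ⟨hay0, le_refl ay⟩,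
        abs_of_nonpos (by linarith), neg_sub]
    have e1' : dist x (f c) = s := by
      rw [← hw0, ← hws, hwI 0 ⟨le_refl 0, dist_nonneg⟩ s hsI, abs_sub_comm, sub_zero,
        abs_of_nonneg hsI.1]
    have e2' : dist (f c) y = dist x y - s := by
      have := hwI s hsI (dist x y) ⟨dist_nonneg, le_refl _⟩
      rw [hws, hwd, abs_of_nonpos (by linarith [hsI.2]), neg_sub] at this
      exact this
    have : dist x y = L1 + L2 := by linarith
    linarith
  -- conclude: geodesics agree up to the Gromov product
  intro t ht
  have hhc : (ax + ay - dist x y) / 2 ≤ c := by linarith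
  exact geo_unique htree f g c
    (fun s hs t' ht' => hf s ⟨hs.1, hs.2.trans hcx⟩ t' ⟨ht'.1, ht'.2.trans hcx⟩)
    (fun s hs t' ht' => hg s ⟨hs.1, hs.2.trans hcy⟩ t' ⟨ht'.1, ht'.2.trans hcy⟩)
    (by rw [hf0, hg0]) hfgc t ⟨ht.1, ht.2.trans hhc⟩

/-- The metric restricted to a sphere around the root is an ultrametric. -/
lemma sphere_ultra {T : Type*} [MetricSpace T] {seg : T → T → Set T}
    (htree : IsRealTree seg) (ρ : T) (a : ℝ) (x y z : T)
    (hx : dist ρ x = a) (hy : dist ρ y = a) (hz : dist ρ z = a) :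
    dist x z ≤ max (dist x y) (dist y z) := by
  obtain ⟨f, hf0, hfx, hfI, -⟩ := htree.geodesic ρ x
  obtain ⟨g, hg0, hgy, hgI, -⟩ := htree.geodesic ρ y
  obtain ⟨k, hk0, hkz, hkI, -⟩ := htree.geodesic ρ z
  have hxy2a : dist x y ≤ 2 * a := by
    have := dist_triangle x ρ y
    rw [dist_comm x ρ, hx, hy] at this; linarith
  have hyz2a : dist y z ≤ 2 * a := by
    have := dist_triangle y ρ z
    rw [dist_comm y ρ, hy, hz] at this; linarith
  set h1 := (dist ρ x + dist ρ y - dist x y) / 2 with hh1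
  set h2 := (dist ρ y + dist ρ z - dist y z) / 2 with hh2
  have hh1' : h1 = a - dist x y / 2 := by rw [hh1, hx, hy]; ring
  have hh2' : h2 = a - dist y z / 2 := by rw [hh2, hy, hz]; ring
  set h := min h1 h2 with hh
  have h10 : 0 ≤ h1 := by rw [hh1']; linarith
  have h20 : 0 ≤ h2 := by rw [hh2']; linarith
  have h0 : 0 ≤ h := le_min h10 h20
  have h1a : h1 ≤ a := by rw [hh1']; linarith [dist_nonneg (x := x) (y := y)]
  have h2a : h2 ≤ a := by rw [hh2']; linarith [dist_nonneg (x := y) (y := z)]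
  have hha : h ≤ a := (min_le_left _ _).trans h1a
  have hfg := gromov_agree htree ρ x y f g hf0 hfx hfI hg0 hgy hgI h
    ⟨h0, min_le_left _ _⟩
  have hgk := gromov_agree htree ρ y z g k hg0 hgy hgI hk0 hkz hkI h
    ⟨h0, min_le_right _ _⟩
  have e1 : dist x (f h) = a - h := by
    rw [← hfx, hfI (dist ρ x) ⟨dist_nonneg, le_refl _⟩ h ⟨h0, by rw [hx]; exact hha⟩,
      hx, abs_of_nonneg (by linarith)]
  have e2 : dist (k h) z = a - h := by
    rw [← hkz, hkI h ⟨h0, by rw [hz]; exact hha⟩ (dist ρ z) ⟨dist_nonneg, le_refl _⟩,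
      hz, abs_of_nonpos (by linarith), neg_sub]
  have tri := dist_triangle x (f h) z
  rw [e1, hfg, hgk, e2] at tri
  rcases le_total h1 h2 with hc | hc
  · have : h = h1 := min_eq_left hc
    rw [le_max_iff]; left
    rw [this, hh1'] at tri; linarith
  · have : h = h2 := min_eq_right hc
    rw [le_max_iff]; right
    rw [this, hh2'] at tri; linarith

/-- In a compact rooted real tree, for `a > 0`, `σ ∈ T(a)` and
`0 < r < 2a`, the `T(a)`-ball `Γ(σ,r) = B(σ,r) ∩ T(a)` has diameter `< r`, and for
every `r'` with `diam Γ(σ,r) < r' < r` one has `Γ(σ,r') = Γ(σ,r)`. -/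
theorem stmt3 {T : Type*} [MetricSpace T] [CompactSpace T]
    (seg : T → T → Set T) (htree : IsRealTree seg) (ρ : T)
    (a : ℝ) (ha : 0 < a) (σ : T) (hσ : dist ρ σ = a)
    (r : ℝ) (hr : 0 < r) (hr2 : r < 2 * a) :
    Metric.diam (Metric.ball σ r ∩ {τ : T | dist ρ τ = a}) < r
    ∧ ∀ r' : ℝ, Metric.diam (Metric.ball σ r ∩ {τ : T | dist ρ τ = a}) < r' →
        r' < r →
        Metric.ball σ r' ∩ {τ : T | dist ρ τ = a}
          = Metric.ball σ r ∩ {τ : T | dist ρ τ = a} := by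
  have hA : IsClosed {τ : T | dist ρ τ = a} :=
    isClosed_eq (continuous_const.dist continuous_id) continuous_const
  set A := {τ : T | dist ρ τ = a} with hAdef
  set Γ := Metric.ball σ r ∩ A with hΓ
  have hσΓ : σ ∈ Γ := ⟨Metric.mem_ball_self hr, hσ⟩
  have hbdd : Bornology.IsBounded Γ := Metric.isBounded_of_compactSpace
  have ultra : ∀ x y z : T, x ∈ A → y ∈ A → z ∈ A →
      dist x z ≤ max (dist x y) (dist y z) := fun x y z hx hy hz =>
    sphere_ultra htree ρ a x y z hx hy hz
  have hdiam : Metric.diam Γ < r := by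
    set K := closure Γ with hK
    have hKc : IsCompact K := isClosed_closure.isCompact
    have hKA : K ⊆ A := closure_minimal Set.inter_subset_right hA
    have hKne : K.Nonempty := ⟨σ, subset_closure hσΓ⟩
    have hdc : Metric.diam K = Metric.diam Γ := by
      simp only [hK, Metric.diam, EMetric.diam_closure]
    obtain ⟨p, hp, hmax⟩ := (hKc.prod hKc).exists_isMaxOn (hKne.prod hKne)
      (continuous_dist.continuousOn)
    have hple : Metric.diam Γ ≤ dist p.1 p.2 := by
      rw [← hdc]
      refine Metric.diam_le_of_forall_dist_le dist_nonneg fun u hu v hv => ?_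
      exact hmax (Set.mk_mem_prod hu hv)
    have hpge : dist p.1 p.2 ≤ Metric.diam Γ := by
      rw [← hdc]
      exact Metric.dist_le_diam_of_mem hbdd.closure hp.1 hp.2
    have hpd : dist p.1 p.2 = Metric.diam Γ := le_antisymm hpge hple
    rcases eq_or_lt_of_le (Metric.diam_nonneg (s := Γ)) with hD0 | hDpos
    · rw [← hD0]; exact hr
    · -- approximate the extremal pair from inside Γ
      obtain ⟨x', hx'Γ, hx'⟩ := Metric.mem_closure_iff.mp hp.1 _ hDpos
      obtain ⟨y', hy'Γ, hy'⟩ := Metric.mem_closure_iff.mp hp.2 _ hDpos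
      clear hple hpge
      set D := Metric.diam Γ with hDdef
      -- dist x' p.2 = D
      have e1 : D ≤ dist x' p.2 := by
        have h1 := ultra p.1 x' p.2 (hKA hp.1) hx'Γ.2 (hKA hp.2)
        rw [hpd] at h1
        rcases le_max_iff.mp h1 with h | h
        · linarith
        · exact h
      -- dist x' y' ≥ D
      have e2 : D ≤ dist x' y' := by
        have h1 := ultra x' y' p.2 hx'Γ.2 hy'Γ.2 (hKA hp.2)
        rcases le_max_iff.mp (e1.trans h1) with h | h
        · exact h
        · rw [dist_comm y' p.2] at h; linarith
      have e3 : dist x' y' ≤ max (dist x' σ) (dist σ y') :=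
        ultra x' σ y' hx'Γ.2 hσ hy'Γ.2
      have hx'r : dist x' σ < r := Metric.mem_ball.mp hx'Γ.1
      have hy'r : dist σ y' < r := by rw [dist_comm]; exact Metric.mem_ball.mp hy'Γ.1
      have : dist x' y' < r := e3.trans_lt (max_lt hx'r hy'r)
      linarith
  refine ⟨hdiam, fun r' hdr' hr'r => ?_⟩
  apply Set.Subset.antisymm
  · exact Set.inter_subset_inter_left _ (Metric.ball_subset_ball hr'r.le)
  · rintro τ ⟨hτb, hτA⟩
    refine ⟨Metric.mem_ball.mpr ?_, hτA⟩
    calc dist τ σ ≤ Metric.diam Γ := Metric.dist_le_diam_of_mem hbdd ⟨hτb, hτA⟩ hσΓ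
      _ < r' := hdr'
end

section
/- Lower deviation bound for the Feller diffusion: Let (Y_b)_{b≥0} be a Feller diffusion with branching mechanism ψ(λ)=λ² started at x ≥ 0, i.e. a continuous Markov process with E[exp(−λ Y_{b+b'}) | Y_b] = exp(−λ Y_b /(1+b'λ)). Then for all 0 ≤ y ≤ x and a > 0, P(inf_{b∈[0,a]} Y_b ≤ y) ≤ exp(−(√x − √y)²/a). -/
open MeasureTheory

/-- `(Y_b)_{b ≥ 0}` is a Feller diffusion with branching mechanism `ψ(λ) = λ²` started at
`x`: a nonnegative continuous Markov process with `Y_0 = x` whose conditional Laplace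
transform given the past up to time `b` satisfies
`E[exp(-λ Y_{b+b'}) | F_b] = exp(-λ Y_b / (1 + b' λ))`. -/
def IsFellerDiffusion {Ω : Type*} [MeasurableSpace Ω] (μ : Measure Ω)
    (Y : ℝ → Ω → ℝ) (x : ℝ) : Prop :=
  (∀ b, Measurable (Y b)) ∧
  (∀ ω, Continuous fun b => Y b ω) ∧
  (∀ b ω, 0 ≤ Y b ω) ∧
  (∀ ω, Y 0 ω = x) ∧
  ∀ b b' lam : ℝ, 0 ≤ b → 0 ≤ b' → 0 ≤ lam →
    (μ[(fun ω => Real.exp (-(lam * Y (b + b') ω))) |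
        MeasurableSpace.comap (fun ω => fun s : Set.Iic b => Y (s : ℝ) ω)
          MeasurableSpace.pi])
      =ᵐ[μ] fun ω => Real.exp (-(Y b ω * lam) / (1 + b' * lam))

section aux
variable {Ω : Type*} [MeasurableSpace Ω] (μ : Measure Ω) [IsProbabilityMeasure μ]
  (Y : ℝ → Ω → ℝ)

/-- filtration σ-algebra -/
def FD_F (Y : ℝ → Ω → ℝ) (b : ℝ) : MeasurableSpace Ω :=
  MeasurableSpace.comap (fun ω => fun s : Set.Iic b => Y (s : ℝ) ω) MeasurableSpace.pi

/-- the exponential martingale -/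
noncomputable def FD_M (Y : ℝ → Ω → ℝ) (lam : ℝ) (u : ℝ) (ω : Ω) : ℝ :=
  Real.exp (-(lam / (1 - u * lam) * Y u ω))

lemma FD_F_le (hYm : ∀ b, Measurable (Y b)) (b : ℝ) : FD_F Y b ≤ ‹MeasurableSpace Ω› :=
  measurable_iff_comap_le.mp (measurable_pi_lambda _ fun t => hYm t)

lemma FD_meas_of_le (hYm : ∀ b, Measurable (Y b)) {u s : ℝ} (hu : u ≤ s) :
    Measurable[FD_F Y s] (Y u) := by
  have h : Measurable[FD_F Y s] (fun ω => fun t : Set.Iic s => Y (t : ℝ) ω) :=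
    comap_measurable _
  exact (measurable_pi_apply (⟨u, hu⟩ : Set.Iic s)).comp h

lemma FD_M_meas (hYm : ∀ b, Measurable (Y b)) (lam u : ℝ) :
    Measurable (FD_M Y lam u) :=
  Real.measurable_exp.comp ((hYm u).const_mul _).neg

lemma FD_M_measF (hYm : ∀ b, Measurable (Y b)) (lam : ℝ) {u s : ℝ} (hu : u ≤ s) :
    Measurable[FD_F Y s] (FD_M Y lam u) :=
  Real.measurable_exp.comp ((FD_meas_of_le Y hYm hu).const_mul _).neg

lemma FD_M_pos (lam u : ℝ) (ω : Ω) : 0 < FD_M Y lam u ω := Real.exp_pos _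

lemma FD_M_le_one (hYpos : ∀ b ω, 0 ≤ Y b ω) {lam : ℝ} (hlam : 0 ≤ lam)
    {u : ℝ} (hu : u * lam ≤ 1) (ω : Ω) : FD_M Y lam u ω ≤ 1 := by
  rw [FD_M, Real.exp_le_one_iff]
  have h1 : 0 ≤ 1 - u * lam := by linarith
  have := mul_nonneg (div_nonneg hlam h1) (hYpos u ω)
  linarith

lemma FD_M_int (hYm : ∀ b, Measurable (Y b)) (hYpos : ∀ b ω, 0 ≤ Y b ω) {lam : ℝ}
    (hlam : 0 ≤ lam) {u : ℝ} (hu : u * lam ≤ 1) : Integrable (FD_M Y lam u) μ := by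
  refine (integrable_const (1 : ℝ)).mono'
    (FD_M_meas Y hYm lam u).aestronglyMeasurable (ae_of_all _ fun ω => ?_)
  rw [Real.norm_eq_abs, abs_of_pos (FD_M_pos Y lam u ω)]
  exact FD_M_le_one Y hYpos hlam hu ω

end aux

section mart
variable {Ω : Type*} [MeasurableSpace Ω] (μ : Measure Ω) [IsProbabilityMeasure μ]
  (Y : ℝ → Ω → ℝ) (x : ℝ)

set_option linter.unusedSectionVars false

lemma FD_mart (hY : IsFellerDiffusion μ Y x) {lam a : ℝ} (hlam : 0 < lam)
    (hla : a * lam < 1) {s : ℝ} (hs0 : 0 ≤ s) (hsa : s ≤ a)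
    {B : Set Ω} (hB : MeasurableSet[FD_F Y s] B) :
    ∫ ω in B, FD_M Y lam a ω ∂μ = ∫ ω in B, FD_M Y lam s ω ∂μ := by
  obtain ⟨hYm, hYc, hYpos, hY0, hMkv⟩ := hY
  have ha1 : (0:ℝ) < 1 - a * lam := by linarith
  have hs1 : (0:ℝ) < 1 - s * lam := by nlinarith
  set nu : ℝ := lam / (1 - a * lam) with hnu
  have hnu0 : 0 ≤ nu := le_of_lt (div_pos hlam ha1)
  have hmkv := hMkv s (a - s) nu hs0 (by linarith) hnu0
  rw [show s + (a - s) = a by ring] at hmkv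
  have hm : FD_F Y s ≤ ‹MeasurableSpace Ω› := FD_F_le Y hYm s
  have hint : Integrable (fun ω => Real.exp (-(nu * Y a ω))) μ := by
    have : (fun ω => Real.exp (-(nu * Y a ω))) = FD_M Y lam a := by
      funext ω; rw [FD_M]
    rw [this]
    exact FD_M_int μ Y hYm hYpos hlam.le (by linarith)
  have h1 : ∫ ω in B, Real.exp (-(nu * Y a ω)) ∂μ
      = ∫ ω in B, (μ[(fun ω => Real.exp (-(nu * Y a ω))) | FD_F Y s]) ω ∂μ :=
    (setIntegral_condExp hm hint hB).symm
  have h2 : ∫ ω in B, (μ[(fun ω => Real.exp (-(nu * Y a ω))) | FD_F Y s]) ω ∂μ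
      = ∫ ω in B, Real.exp (-(Y s ω * nu) / (1 + (a - s) * nu)) ∂μ := by
    apply integral_congr_ae
    exact ae_restrict_of_ae hmkv
  have hDeq : (1:ℝ) + (a - s) * (lam / (1 - a * lam)) = (1 - s*lam)/(1-a*lam) := by
    field_simp
    ring
  have hD : (1:ℝ) + (a - s) * (lam / (1 - a * lam)) ≠ 0 := by
    rw [hDeq]
    positivity
  have h3 : (fun ω => Real.exp (-(Y s ω * nu) / (1 + (a - s) * nu))) = FD_M Y lam s := by
    funext ω
    rw [FD_M]
    congr 1
    rw [hnu, div_eq_iff hD, hDeq]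
    have hs1' : (1 - s*lam)⁻¹ * (1 - s*lam) = 1 := inv_mul_cancel₀ hs1.ne'
    linear_combination (lam * Y s ω * (1 - a*lam)⁻¹) * hs1'
  have h4 : (fun ω => Real.exp (-(nu * Y a ω))) = FD_M Y lam a := by
    funext ω; rw [FD_M]
  calc ∫ ω in B, FD_M Y lam a ω ∂μ = ∫ ω in B, Real.exp (-(nu * Y a ω)) ∂μ := by rw [h4]
    _ = ∫ ω in B, Real.exp (-(Y s ω * nu) / (1 + (a - s) * nu)) ∂μ := h1.trans h2
    _ = ∫ ω in B, FD_M Y lam s ω ∂μ := by rw [h3]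
end mart

section maximal
variable {Ω : Type*} [MeasurableSpace Ω] (μ : Measure Ω) [IsProbabilityMeasure μ]
  (Y : ℝ → Ω → ℝ) (x : ℝ)

set_option linter.unusedSectionVars false

lemma FD_maximal (hY : IsFellerDiffusion μ Y x) {lam a : ℝ} (hlam : 0 < lam)
    (ha : 0 < a) (hla : a * lam < 1) {c : ℝ} (hc : 0 < c) (T : Finset ℝ)
    (hT : ∀ s ∈ T, s ∈ Set.Icc 0 a) :
    c * (μ {ω | ∃ s ∈ T, c ≤ FD_M Y lam s ω}).toReal ≤ Real.exp (-(lam * x)) := by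
  obtain ⟨hYm, hYc, hYpos, hY0, hMkv⟩ := hY
  have ha1 : (0:ℝ) < 1 - a * lam := by linarith
  classical
  set M := FD_M Y lam with hM
  -- the first-entry sets
  set B : ℝ → Set Ω := fun s => {ω | c ≤ M s ω ∧ ∀ s' ∈ T, s' < s → M s' ω < c} with hB
  -- ambient measurability
  have hmeasM : ∀ u, Measurable (M u) := fun u => FD_M_meas Y hYm lam u
  have hmeasB : ∀ s, MeasurableSet (B s) := by
    intro s
    have : B s = {ω | c ≤ M s ω} ∩ ⋂ s' ∈ T, ⋂ (_ : s' < s), {ω | M s' ω < c} := by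
      ext ω
      simp [hB, Set.mem_iInter]
    rw [this]
    exact (measurableSet_le measurable_const (hmeasM s)).inter
      (MeasurableSet.biInter T.countable_toSet fun s' _ =>
        MeasurableSet.iInter fun _ => measurableSet_lt (hmeasM s') measurable_const)
  -- measurability with respect to the filtration
  have hmeasBF : ∀ s ∈ T, MeasurableSet[FD_F Y s] (B s) := by
    intro s hs
    have : B s = {ω | c ≤ M s ω} ∩ ⋂ s' ∈ T, ⋂ (_ : s' < s), {ω | M s' ω < c} := by
      ext ω
      simp [hB, Set.mem_iInter]
    rw [this]
    refine MeasurableSet.inter ?_ ?_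
    · exact measurableSet_le measurable_const (FD_M_measF Y hYm lam le_rfl)
    · exact MeasurableSet.biInter T.countable_toSet fun s' hs' =>
        MeasurableSet.iInter fun hlt => measurableSet_lt (FD_M_measF Y hYm lam hlt.le)
          measurable_const
  -- disjointness
  have hdisj : (T : Set ℝ).PairwiseDisjoint B := by
    intro s hsT s' hs'T hne
    rcases lt_or_gt_of_ne hne with h | h
    · refine Set.disjoint_left.mpr fun ω hω hω' => ?_
      exact absurd hω.1 (not_le.mpr (hω'.2 s hsT h))
    · refine Set.disjoint_left.mpr fun ω hω hω' => ?_
      exact absurd hω'.1 (not_le.mpr (hω.2 s' hs'T h))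
  -- covering
  have hcover : {ω | ∃ s ∈ T, c ≤ M s ω} = ⋃ s ∈ T, B s := by
    ext ω
    simp only [Set.mem_setOf_eq, Set.mem_iUnion]
    constructor
    · rintro ⟨s, hs, hcs⟩
      have hne : (T.filter (fun u => c ≤ M u ω)).Nonempty :=
        ⟨s, Finset.mem_filter.mpr ⟨hs, hcs⟩⟩
      obtain ⟨s₀, hs₀mem, hs₀min⟩ := Finset.exists_min_image
        (T.filter (fun u => c ≤ M u ω)) id hne
      rw [Finset.mem_filter] at hs₀mem
      refine ⟨s₀, hs₀mem.1, hs₀mem.2, fun s' hs' hlt => ?_⟩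
      by_contra hcon
      push_neg at hcon
      have h := hs₀min s' (Finset.mem_filter.mpr ⟨hs', hcon⟩)
      simp only [id] at h
      exact absurd hlt (not_lt.mpr h)
    · rintro ⟨s, hs, hω⟩
      exact ⟨s, hs, hω.1⟩
  -- integrability
  have hintM : ∀ u, u ∈ Set.Icc (0:ℝ) a → Integrable (M u) μ := fun u hu =>
    FD_M_int μ Y hYm hYpos hlam.le (by nlinarith [hu.1, hu.2])
  have hinta : Integrable (M a) μ := hintM a ⟨ha.le, le_rfl⟩
  -- key step per piece
  have hpiece : ∀ s ∈ T, c * (μ (B s)).toReal ≤ ∫ ω in B s, M a ω ∂μ := by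
    intro s hs
    obtain ⟨hs0, hsa⟩ := hT s hs
    have h1 : c * (μ (B s)).toReal ≤ ∫ ω in B s, M s ω ∂μ :=
      setIntegral_ge_of_const_le_real (hmeasB s) (measure_ne_top μ _)
        (fun ω hω => hω.1) ((hintM s ⟨hs0, hsa⟩).integrableOn)
    have h2 : ∫ ω in B s, M a ω ∂μ = ∫ ω in B s, M s ω ∂μ :=
      FD_mart μ Y x ⟨hYm, hYc, hYpos, hY0, hMkv⟩ hlam hla hs0 hsa (hmeasBF s hs)
    rw [h2]
    exact h1
  -- sum up
  rw [hcover, measure_biUnion_finset hdisj (fun s _ => hmeasB s)]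
  rw [ENNReal.toReal_sum (fun s _ => measure_ne_top μ _), Finset.mul_sum]
  have hsum : ∑ s ∈ T, c * (μ (B s)).toReal ≤ ∑ s ∈ T, ∫ ω in B s, M a ω ∂μ :=
    Finset.sum_le_sum fun s hs => hpiece s hs
  have hunion : ∑ s ∈ T, ∫ ω in B s, M a ω ∂μ = ∫ ω in ⋃ s ∈ T, B s, M a ω ∂μ :=
    (integral_biUnion_finset T (fun s _ => hmeasB s) hdisj
      (fun s _ => hinta.integrableOn)).symm
  have hle : ∫ ω in ⋃ s ∈ T, B s, M a ω ∂μ ≤ ∫ ω, M a ω ∂μ :=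
    setIntegral_le_integral hinta (ae_of_all _ fun ω => (FD_M_pos Y lam a ω).le)
  have hfin : ∫ ω, M a ω ∂μ = Real.exp (-(lam * x)) := by
    have h0 : ∫ ω in (Set.univ : Set Ω), M a ω ∂μ = ∫ ω in (Set.univ : Set Ω), M 0 ω ∂μ :=
      FD_mart μ Y x ⟨hYm, hYc, hYpos, hY0, hMkv⟩ hlam hla le_rfl ha.le MeasurableSet.univ
    rw [setIntegral_univ, setIntegral_univ] at h0
    rw [h0]
    have : M 0 = fun _ => Real.exp (-(lam * x)) := by
      funext ω
      rw [hM, FD_M, hY0 ω]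
      norm_num
    rw [this, integral_const]
    simp
  calc ∑ s ∈ T, c * (μ (B s)).toReal ≤ ∑ s ∈ T, ∫ ω in B s, M a ω ∂μ := hsum
    _ = ∫ ω in ⋃ s ∈ T, B s, M a ω ∂μ := hunion
    _ ≤ ∫ ω, M a ω ∂μ := hle
    _ = Real.exp (-(lam * x)) := hfin
end maximal

section key
variable {Ω : Type*} [MeasurableSpace Ω] (μ : Measure Ω) [IsProbabilityMeasure μ]
  (Y : ℝ → Ω → ℝ) (x : ℝ)

set_option linter.unusedSectionVars false

lemma FD_key (hY : IsFellerDiffusion μ Y x) {y lam a : ℝ} (hy0 : 0 ≤ y)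
    (hlam : 0 < lam) (ha : 0 < a) (hla : a * lam < 1) :
    μ {ω | (⨅ b : Set.Icc (0:ℝ) a, Y (b : ℝ) ω) ≤ y}
      ≤ ENNReal.ofReal (Real.exp (lam / (1 - a * lam) * y - lam * x)) := by
  obtain ⟨hYm, hYc, hYpos, hY0, hMkv⟩ := hY
  have ha1 : (0:ℝ) < 1 - a * lam := by linarith
  classical
  set M := FD_M Y lam with hM
  set c : ℝ := Real.exp (-(lam / (1 - a * lam) * y)) with hc_def
  have hc : 0 < c := Real.exp_pos _
  -- countable dense sequence in [0,a]
  obtain ⟨r, hr⟩ := exists_surjective_nat ℚ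
  set d : ℕ → ℝ := fun k => max (min a ((r k : ℚ) : ℝ)) 0 with hd
  have hdIcc : ∀ k, d k ∈ Set.Icc (0:ℝ) a := fun k =>
    ⟨le_max_right _ _, max_le (min_le_left _ _) ha.le⟩
  have hdense : ∀ s ∈ Set.Icc (0:ℝ) a, ∀ ε > (0:ℝ), ∃ k, |d k - s| < ε := by
    intro s hs ε hε
    obtain ⟨q, hq⟩ := exists_rat_near s hε
    obtain ⟨k, rfl⟩ := hr q
    refine ⟨k, ?_⟩
    rw [hd]
    have h1 : s = max (min a s) 0 := by
      rw [min_eq_right hs.2, max_eq_left hs.1]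
    calc |max (min a ((r k : ℚ):ℝ)) 0 - s| = |max (min a ((r k : ℚ):ℝ)) 0 - max (min a s) 0| := by
          rw [← h1]
      _ ≤ |min a ((r k : ℚ):ℝ) - min a s| := abs_max_sub_max_le_abs _ _ _
      _ ≤ max |a - a| |((r k : ℚ):ℝ) - s| := abs_min_sub_min_le_max _ _ _ _
      _ < ε := by rw [sub_self, abs_zero]; rw [abs_sub_comm] at hq;
                  exact max_lt hε hq
  -- the target event is inside the union of finite events, for any c' < c
  have hsubset : ∀ c' ∈ Set.Ioo (0:ℝ) c,
      {ω | (⨅ b : Set.Icc (0:ℝ) a, Y (b : ℝ) ω) ≤ y}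
        ⊆ ⋃ n, {ω | ∃ s ∈ (Finset.range (n+1)).image d, c' ≤ M s ω} := by
    rintro c' ⟨hc'0, hc'c⟩ ω hω
    simp only [Set.mem_setOf_eq] at hω
    -- the infimum is attained
    obtain ⟨s, hsIcc, hsmin⟩ := (isCompact_Icc (a := (0:ℝ)) (b := a)).exists_isMinOn
      (Set.nonempty_Icc.mpr ha.le) ((hYc ω).continuousOn)
    have hYs : Y s ω ≤ y := by
      haveI : Nonempty ↑(Set.Icc (0:ℝ) a) := ⟨⟨0, Set.mem_Icc.mpr ⟨le_rfl, ha.le⟩⟩⟩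
      refine le_trans (le_ciInf fun b => hsmin b.2) hω
    -- M s ω ≥ c
    have hs1 : (0:ℝ) < 1 - s * lam := by nlinarith [hsIcc.1, hsIcc.2]
    have hMs : c ≤ M s ω := by
      rw [hM, FD_M, hc_def, Real.exp_le_exp, neg_le_neg_iff]
      have hnum : lam / (1 - s * lam) ≤ lam / (1 - a * lam) :=
        div_le_div_of_nonneg_left hlam.le ha1
          (by nlinarith [hsIcc.2, mul_nonneg (sub_nonneg.mpr hsIcc.2) hlam.le])
      exact mul_le_mul hnum hYs (hYpos s ω) (div_nonneg hlam.le ha1.le)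
    -- continuity of u ↦ M u ω at s
    have hcont : ContinuousAt (fun u => M u ω) s := by
      have h1 : ContinuousAt (fun u : ℝ => lam / (1 - u * lam)) s :=
        continuousAt_const.div (by fun_prop) hs1.ne'
      have h2 : ContinuousAt (fun u => Y u ω) s := (hYc ω).continuousAt
      exact Real.continuous_exp.continuousAt.comp (h1.mul h2).neg
    have hev : {u : ℝ | c' < M u ω} ∈ nhds s :=
      hcont.preimage_mem_nhds (Ioi_mem_nhds (lt_of_lt_of_le hc'c hMs))
    obtain ⟨δ, hδ0, hball⟩ := Metric.mem_nhds_iff.mp hev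
    obtain ⟨k, hk⟩ := hdense s hsIcc δ hδ0
    have : c' < M (d k) ω := hball (by rwa [Metric.mem_ball, Real.dist_eq])
    refine Set.mem_iUnion.mpr ⟨k, ?_⟩
    exact ⟨d k, Finset.mem_image.mpr ⟨k, Finset.mem_range.mpr (Nat.lt_succ_self k), rfl⟩,
      this.le⟩
  -- bound for each c' < c
  have hbound : ∀ c' ∈ Set.Ioo (0:ℝ) c,
      μ {ω | (⨅ b : Set.Icc (0:ℝ) a, Y (b : ℝ) ω) ≤ y}
        ≤ ENNReal.ofReal (Real.exp (-(lam * x)) / c') := by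
    rintro c' ⟨hc'0, hc'c⟩
    have hmono : Monotone (fun n => {ω | ∃ s ∈ (Finset.range (n+1)).image d, c' ≤ M s ω}) := by
      intro m n hmn ω ⟨s, hsmem, hsc⟩
      exact ⟨s, Finset.image_subset_image (Finset.range_subset_range.mpr (by omega)) hsmem, hsc⟩
    have hEn : ∀ n, μ {ω | ∃ s ∈ (Finset.range (n+1)).image d, c' ≤ M s ω}
        ≤ ENNReal.ofReal (Real.exp (-(lam * x)) / c') := by
      intro n
      have hfin := FD_maximal μ Y x ⟨hYm, hYc, hYpos, hY0, hMkv⟩ hlam ha hla hc'0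
        ((Finset.range (n+1)).image d) (by
          intro s hs
          obtain ⟨k, _, rfl⟩ := Finset.mem_image.mp hs
          exact hdIcc k)
      have hne : μ {ω | ∃ s ∈ (Finset.range (n+1)).image d, c' ≤ M s ω} ≠ ⊤ :=
        measure_ne_top μ _
      rw [← ENNReal.ofReal_toReal hne]
      apply ENNReal.ofReal_le_ofReal
      rw [le_div_iff₀ hc'0, mul_comm]
      exact hfin
    calc μ {ω | (⨅ b : Set.Icc (0:ℝ) a, Y (b : ℝ) ω) ≤ y}
        ≤ μ (⋃ n, {ω | ∃ s ∈ (Finset.range (n+1)).image d, c' ≤ M s ω}) :=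
          measure_mono (hsubset c' ⟨hc'0, hc'c⟩)
      _ ≤ ENNReal.ofReal (Real.exp (-(lam * x)) / c') := by
          rw [hmono.directed_le.measure_iUnion]
          exact iSup_le hEn
  -- pass to the limit c' → c
  have hfinal : μ {ω | (⨅ b : Set.Icc (0:ℝ) a, Y (b : ℝ) ω) ≤ y}
      ≤ ENNReal.ofReal (Real.exp (-(lam * x)) / c) := by
    set m : ℝ := (μ {ω | (⨅ b : Set.Icc (0:ℝ) a, Y (b : ℝ) ω) ≤ y}).toReal with hm_def
    have hmne : μ {ω | (⨅ b : Set.Icc (0:ℝ) a, Y (b : ℝ) ω) ≤ y} ≠ ⊤ := measure_ne_top μ _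
    have hm0 : 0 ≤ m := ENNReal.toReal_nonneg
    set e : ℝ := Real.exp (-(lam * x)) with he_def
    have he : 0 < e := Real.exp_pos _
    have hmr : ∀ c' ∈ Set.Ioo (0:ℝ) c, m ≤ e / c' := by
      intro c' hc'
      have := hbound c' hc'
      rw [← ENNReal.ofReal_toReal hmne] at this
      exact (ENNReal.ofReal_le_ofReal_iff (div_nonneg he.le hc'.1.le)).mp this
    have hmc : m ≤ e / c := by
      by_contra hcon
      push_neg at hcon
      have hm_pos : 0 < m := lt_of_le_of_lt (div_nonneg he.le hc.le) hcon
      have h1 : e / m < c := by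
        rw [div_lt_iff₀ hm_pos]
        rw [div_lt_iff₀ hc] at hcon
        linarith [mul_comm m c]
      obtain ⟨c', hc'1, hc'2⟩ := exists_between h1
      have hc'0 : 0 < c' := lt_of_le_of_lt (div_nonneg he.le hm0) hc'1
      have := hmr c' ⟨hc'0, hc'2⟩
      rw [le_div_iff₀ hc'0] at this
      rw [div_lt_iff₀ hm_pos] at hc'1
      nlinarith
    rw [← ENNReal.ofReal_toReal hmne]
    exact ENNReal.ofReal_le_ofReal hmc
  -- rewrite the bound
  have hrw : Real.exp (-(lam * x)) / c = Real.exp (lam / (1 - a * lam) * y - lam * x) := by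
    rw [hc_def, ← Real.exp_sub]
    congr 1
    ring
  rwa [hrw] at hfinal
end key


/-- lower deviation bound for the Feller diffusion: if `(Y_b)` is a Feller
diffusion with branching mechanism `λ²` started at `x ≥ 0`, then for all `0 ≤ y ≤ x` and
`a > 0`, `P(inf_{b ∈ [0,a]} Y_b ≤ y) ≤ exp(-(√x - √y)²/a)`. -/
theorem stmt10 {Ω : Type*} [MeasurableSpace Ω] (μ : Measure Ω) [IsProbabilityMeasure μ]
    (Y : ℝ → Ω → ℝ) (x y a : ℝ) (hx : 0 ≤ x)
    (hY : IsFellerDiffusion μ Y x)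
    (hy0 : 0 ≤ y) (hyx : y ≤ x) (ha : 0 < a) :
    μ {ω | (⨅ b : Set.Icc (0:ℝ) a, Y (b : ℝ) ω) ≤ y}
      ≤ ENNReal.ofReal (Real.exp (-(Real.sqrt x - Real.sqrt y) ^ 2 / a)) := by

  rcases eq_or_lt_of_le hyx with heq | hlt
  · -- y = x : trivial bound
    subst heq
    calc μ {ω | (⨅ b : Set.Icc (0:ℝ) a, Y (b : ℝ) ω) ≤ y} ≤ 1 := prob_le_one
      _ = ENNReal.ofReal (Real.exp (-(Real.sqrt y - Real.sqrt y) ^ 2 / a)) := by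
          rw [sub_self]
          norm_num
  · have hxpos : 0 < x := lt_of_le_of_lt hy0 hlt
    have hu : 0 < Real.sqrt x := Real.sqrt_pos.mpr hxpos
    set u : ℝ := Real.sqrt x with hu_def
    set v : ℝ := Real.sqrt y with hv_def
    have hx2 : u ^ 2 = x := Real.sq_sqrt hx
    have hy2 : v ^ 2 = y := Real.sq_sqrt hy0
    have hvu : v < u := Real.sqrt_lt_sqrt hy0 hlt
    rcases eq_or_lt_of_le hy0 with hy' | hy'
    · -- y = 0 : pass to the limit lam → 1/a
      have hv0 : v = 0 := by rw [hv_def, ← hy', Real.sqrt_zero]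
      set lam : ℕ → ℝ := fun n => ((n:ℝ)+1)/(((n:ℝ)+2)*a) with hlam_def
      have hlam : ∀ n, 0 < lam n := fun n => by positivity
      have hla : ∀ n, a * lam n < 1 := by
        intro n
        rw [hlam_def]
        have h2 : (0:ℝ) < (n:ℝ)+2 := by positivity
        have : a * (((n:ℝ)+1)/(((n:ℝ)+2)*a)) = ((n:ℝ)+1)/((n:ℝ)+2) := by
          field_simp
        rw [this, div_lt_one h2]
        linarith
      have hb : ∀ n, μ {ω | (⨅ b : Set.Icc (0:ℝ) a, Y (b : ℝ) ω) ≤ y}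
          ≤ ENNReal.ofReal (Real.exp (-(lam n * x))) := by
        intro n
        have := FD_key μ Y x hY hy0 (hlam n) ha (hla n)
        have heq2 : lam n / (1 - a * lam n) * y - lam n * x = -(lam n * x) := by
          rw [← hy', mul_zero, zero_sub]
        rwa [heq2] at this
      have hlim : Filter.Tendsto lam Filter.atTop (nhds (1/a)) := by
        have h1 : Filter.Tendsto (fun n : ℕ => ((n:ℝ)+2)) Filter.atTop Filter.atTop :=
          Filter.tendsto_atTop_add_const_right _ 2 tendsto_natCast_atTop_atTop
        have h2 : Filter.Tendsto (fun n : ℕ => 1/((n:ℝ)+2)) Filter.atTop (nhds 0) := by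
          simpa only [one_div, Pi.inv_def] using h1.inv_tendsto_atTop
        have h3 : Filter.Tendsto (fun n : ℕ => (1 - 1/((n:ℝ)+2)) * (1/a))
            Filter.atTop (nhds ((1 - 0) * (1/a))) :=
          ((tendsto_const_nhds.sub h2).mul tendsto_const_nhds)
        have h4 : (fun n : ℕ => (1 - 1/((n:ℝ)+2)) * (1/a)) = lam := by
          funext n
          rw [hlam_def]
          have h2' : ((n:ℝ)+2) ≠ 0 := by positivity
          field_simp
          ring
        rw [h4] at h3
        simpa using h3
      have hT : Filter.Tendsto (fun n => ENNReal.ofReal (Real.exp (-(lam n * x))))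
          Filter.atTop (nhds (ENNReal.ofReal (Real.exp (-(1/a * x))))) := by
        apply (ENNReal.continuous_ofReal.tendsto _).comp
        apply (Real.continuous_exp.tendsto _).comp
        exact ((hlim.mul tendsto_const_nhds)).neg
      have hfin : μ {ω | (⨅ b : Set.Icc (0:ℝ) a, Y (b : ℝ) ω) ≤ y}
          ≤ ENNReal.ofReal (Real.exp (-(1/a * x))) := ge_of_tendsto' hT hb
      have : -(u - v) ^ 2 / a = -(1/a * x) := by
        rw [hv0, sub_zero, hx2]
        field_simp
      rw [this]
      exact hfin
    · -- 0 < y : optimal lam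
      have hv : 0 < v := Real.sqrt_pos.mpr hy'
      set lam : ℝ := (u - v)/(a*u) with hlam_def
      have hlam : 0 < lam := div_pos (sub_pos.mpr hvu) (mul_pos ha hu)
      have hla : a * lam < 1 := by
        rw [hlam_def]
        have : a * ((u - v)/(a*u)) = (u-v)/u := by
          field_simp
        rw [this, div_lt_one hu]
        linarith
      have hkey := FD_key μ Y x hY hy0 hlam ha hla
      have h1a : 1 - a * lam = v/u := by
        rw [hlam_def]
        field_simp
        ring
      have heq2 : lam / (1 - a * lam) * y - lam * x = -(u - v) ^ 2 / a := by
        rw [h1a, hlam_def, ← hx2, ← hy2]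
        field_simp
        ring
      rw [heq2] at hkey
      exact hkey
end
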